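/- Define ψ₀ : ℝ → ℝ by ψ₀(x) = (1 + |x|)·exp(−(x²/2 + |x|)). Then for every x ∈ ℝ with x ≠ 0, ψ₀ is twice differentiable at x and satisfies −ψ₀''(x) + (|x| + 1)²·ψ₀(x) = 3·ψ₀(x). (Thus ψ₀ is an exact eigenfunction at energy E = 3 of the spiked harmonic oscillator V_{[d]}(x) = (|x| − d)² with d = −1.) -/

import Mathlib

open Real Filter

private noncomputable def fS (s : ℝ) : ℝ → ℝ :=
  fun y => (1 + s * y) * Real.exp (-(y ^ 2 / 2 + s * y))

private noncomputable def gS (s : ℝ) : ℝ → ℝ :=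
  fun y => (s - (1 + s * y) * (y + s)) * Real.exp (-(y ^ 2 / 2 + s * y))

private lemma hasDeriv_expS (s x : ℝ) :
    HasDerivAt (fun y => Real.exp (-(y ^ 2 / 2 + s * y)))
      (Real.exp (-(x ^ 2 / 2 + s * x)) * (-(x + s))) x := by
  have h1 : HasDerivAt (fun y : ℝ => -(y ^ 2 / 2 + s * y)) (-(x + s)) x := by
    have h := (((hasDerivAt_pow 2 x).div_const 2).add ((hasDerivAt_id x).const_mul s)).neg
    refine h.congr_deriv ?_
    ring
  exact h1.exp

private lemma hasDeriv_fS (s x : ℝ) : HasDerivAt (fS s) (gS s x) x := by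
  have h1 : HasDerivAt (fun y : ℝ => 1 + s * y) s x := by
    simpa using ((hasDerivAt_id x).const_mul s).const_add 1
  have h := h1.mul (hasDeriv_expS s x)
  refine h.congr_deriv ?_
  simp only [gS]
  ring

private lemma hasDeriv_gS (s x : ℝ) :
    HasDerivAt (gS s)
      ((-(s * (x + s) + (1 + s * x)) + (s - (1 + s * x) * (x + s)) * (-(x + s))) *
        Real.exp (-(x ^ 2 / 2 + s * x))) x := by
  have h1 : HasDerivAt (fun y : ℝ => s - (1 + s * y) * (y + s)) (-(s * (x + s) + (1 + s * x))) x := by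
    have ha : HasDerivAt (fun y : ℝ => (1 + s * y) * (y + s)) (s * (x + s) + (1 + s * x) * 1) x := by
      have hb : HasDerivAt (fun y : ℝ => 1 + s * y) s x := by
        simpa using ((hasDerivAt_id x).const_mul s).const_add 1
      exact hb.mul ((hasDerivAt_id x).add_const s)
    have h := ha.const_sub s
    refine h.congr_deriv ?_
    ring
  have h := h1.mul (hasDeriv_expS s x)
  refine h.congr_deriv ?_
  ring

/-- Away from the origin, `ψ₀(x) = (1+|x|)·e^{−(x²/2+|x|)}` is twice differentiable
and is an exact eigenfunction at energy `E = 3` of the spiked harmonic oscillator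
`V(x) = (|x|+1)²` (the potential `V_{[d]}` at `d = −1`). -/
theorem spiked_QES_ground_state_eq (ψ₀ : ℝ → ℝ)
    (hψ₀ : ∀ x : ℝ, ψ₀ x = (1 + |x|) * Real.exp (-(x ^ 2 / 2 + |x|))) :
    ∀ x : ℝ, x ≠ 0 →
      DifferentiableAt ℝ ψ₀ x ∧ DifferentiableAt ℝ (deriv ψ₀) x ∧
        -(deriv (deriv ψ₀) x) + (|x| + 1) ^ 2 * ψ₀ x = 3 * ψ₀ x := by
  intro x hx
  obtain ⟨s, hs, habs, heq⟩ :
      ∃ s : ℝ, s * s = 1 ∧ |x| = s * x ∧ ψ₀ =ᶠ[nhds x] fS s := by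
    rcases hx.lt_or_gt with hneg | hpos
    · refine ⟨-1, by norm_num, by rw [abs_of_neg hneg]; ring, ?_⟩
      filter_upwards [eventually_lt_nhds hneg] with y hy
      rw [hψ₀ y, abs_of_neg hy]
      simp only [fS]
      ring_nf
    · refine ⟨1, by norm_num, by rw [abs_of_pos hpos]; ring, ?_⟩
      filter_upwards [eventually_gt_nhds hpos] with y hy
      rw [hψ₀ y, abs_of_pos hy]
      simp only [fS]
      ring_nf
  have hderivfS : deriv (fS s) = gS s := funext fun y => (hasDeriv_fS s y).deriv
  have hderiv' : deriv ψ₀ =ᶠ[nhds x] gS s := by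
    simpa [hderivfS] using heq.deriv
  refine ⟨heq.differentiableAt_iff.mpr (hasDeriv_fS s x).differentiableAt,
    hderiv'.differentiableAt_iff.mpr (hasDeriv_gS s x).differentiableAt, ?_⟩
  have hdd : deriv (deriv ψ₀) x =
      (-(s * (x + s) + (1 + s * x)) + (s - (1 + s * x) * (x + s)) * (-(x + s))) *
        Real.exp (-(x ^ 2 / 2 + s * x)) := by
    rw [hderiv'.deriv_eq, (hasDeriv_gS s x).deriv]
  rw [hψ₀ x, hdd, habs]
  rcases mul_self_eq_one_iff.mp hs with h1 | h1 <;> subst h1 <;> ring
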